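/- Suppose Y = θ + ε where ε ~ N(0, σ²). Then for the soft-threshold estimator θ̂ = η_{σt}(Y) with threshold level σt, the risk satisfies E[(θ̂ - θ)²] ≤ σ²(1 + t²) for every θ ∈ ℝ; moreover at θ = 0, E[η_{σt}(Y)²] ≤ 2σ²(1 + t²)·exp(-t²/2). -/

import Mathlib

open MeasureTheory ProbabilityTheory

/-- Soft-thresholding shrinker `η_s(x) = (|x| - s)₊ · sgn(x)`. -/
noncomputable def softThresh (s x : ℝ) : ℝ := max (|x| - s) 0 * Real.sign x

section SoftThreshAux

open Real Set Filter
open scoped NNReal ENNReal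








private lemma softThresh_eq' {s : ℝ} (hs : 0 ≤ s) (y : ℝ) :
    max (|y| - s) 0 * Real.sign y = y - max (-s) (min s y) := by
  rcases lt_trichotomy y 0 with hy | hy | hy
  · rw [Real.sign_of_neg hy, abs_of_neg hy]
    rcases le_or_gt (-s) y with h | h
    · rw [max_eq_right (by linarith : -y - s ≤ 0), max_eq_right (by rw [min_eq_right (by linarith : y ≤ s)]; exact h)]
      rw [min_eq_right (by linarith : y ≤ s)]; ring
    · rw [max_eq_left (by linarith : 0 ≤ -y - s), min_eq_right (by linarith : y ≤ s),
        max_eq_left (by linarith : y ≤ -s)]; ring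
  · subst hy; simp [min_eq_right hs, max_eq_right (neg_nonpos.mpr hs)]
  · rw [Real.sign_of_pos hy, abs_of_pos hy]
    rcases le_or_gt y s with h | h
    · rw [max_eq_right (by linarith : y - s ≤ 0), min_eq_right h,
        max_eq_right (by linarith : -s ≤ y)]; ring
    · rw [max_eq_left (by linarith : 0 ≤ y - s), min_eq_left (le_of_lt h),
        max_eq_right (by linarith : -s ≤ s)]; ring

private lemma tendsto_mul_exp_zero {b : ℝ} (hb : 0 < b) :
    Tendsto (fun x : ℝ => x * Real.exp (-b * x ^ 2)) atTop (nhds 0) := by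
  have h := rpow_mul_exp_neg_mul_sq_isLittleO_exp_neg hb 1
  simp only [Real.rpow_one] at h
  refine h.isBigO.trans_tendsto ?_
  have : Tendsto (fun x : ℝ => -(1/2) * x) atTop atBot := by
    apply Tendsto.const_mul_atTop_of_neg (by norm_num : (-(1/2) : ℝ) < 0) tendsto_id
  exact Real.tendsto_exp_atBot.comp this

private lemma integrable_sq_exp {b : ℝ} (hb : 0 < b) :
    Integrable (fun x : ℝ => x ^ 2 * Real.exp (-b * x ^ 2)) := by
  have h := integrable_rpow_mul_exp_neg_mul_sq hb (by norm_num : (-1:ℝ) < 2)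
  have e : ∀ x : ℝ, x ^ (2:ℝ) = x ^ 2 := fun x => by
    rw [show (2:ℝ) = ((2:ℕ):ℝ) by norm_num, Real.rpow_natCast]
  simpa only [e] using h

private lemma integral_Ioi_sq_exp {b : ℝ} (hb : 0 < b) :
    ∫ x in Ioi (0:ℝ), x ^ 2 * Real.exp (-b * x ^ 2)
      = (2*b)⁻¹ * (Real.sqrt (π / b) / 2) := by
  have h1 : IntegrableOn (fun x : ℝ => x ^ 2 * Real.exp (-b * x ^ 2)) (Ioi 0) :=
    (integrable_sq_exp hb).integrableOn
  have h2 : IntegrableOn (fun x : ℝ => (2*b)⁻¹ * Real.exp (-b * x ^ 2)) (Ioi 0) :=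
    ((integrable_exp_neg_mul_sq hb).const_mul _).integrableOn
  have key : ∫ x in Ioi (0:ℝ),
      (x ^ 2 * Real.exp (-b * x ^ 2) - (2*b)⁻¹ * Real.exp (-b * x ^ 2))
      = 0 - (-(2*b)⁻¹ * ((0:ℝ) * Real.exp (-b * (0:ℝ) ^ 2))) := by
    apply integral_Ioi_of_hasDerivAt_of_tendsto
      (f := fun x : ℝ => -(2*b)⁻¹ * (x * Real.exp (-b * x ^ 2)))
    · exact (Continuous.continuousWithinAt (by fun_prop))
    · intro x _
      have hx : HasDerivAt (fun x : ℝ => x * Real.exp (-b * x ^ 2))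
          (1 * Real.exp (-b * x ^ 2) + x * (Real.exp (-b * x ^ 2) * (-b * (2 * x)))) x := by
        have hexp : HasDerivAt (fun x : ℝ => Real.exp (-b * x ^ 2))
            (Real.exp (-b * x ^ 2) * (-b * (2 * x))) x := by
          have harg : HasDerivAt (fun x : ℝ => -b * x ^ 2) (-b * (2 * x)) x := by
            simpa using ((hasDerivAt_pow 2 x).const_mul (-b))
          exact harg.exp
        exact (hasDerivAt_id x).mul hexp
      have := hx.const_mul (-(2*b)⁻¹)
      refine this.congr_deriv ?_
      field_simp
      ring
    · exact h1.sub h2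
    · have := (tendsto_mul_exp_zero hb).const_mul (-(2*b)⁻¹)
      simpa using this
  rw [integral_sub h1 h2, integral_const_mul, integral_gaussian_Ioi b] at key
  simp only [zero_pow, mul_zero, zero_mul, neg_zero, sub_zero] at key
  linarith [key]


private lemma gauss_integral_eq {v : ℝ≥0} (hv : v ≠ 0) (g : ℝ → ℝ) :
    ∫ x, g x ∂(gaussianReal 0 v) = ∫ x, gaussianPDFReal 0 v x * g x := by
  rw [gaussianReal_of_var_ne_zero 0 hv]
  have hd : gaussianPDF 0 v = fun x => ((Real.toNNReal (gaussianPDFReal 0 v x) : ℝ≥0) : ℝ≥0∞) :=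
    rfl
  rw [hd, integral_withDensity_eq_integral_smul ((measurable_gaussianPDFReal 0 v).real_toNNReal) g]
  congr 1
  funext x
  rw [NNReal.smul_def, Real.coe_toNNReal _ (gaussianPDFReal_nonneg 0 v x), smul_eq_mul]

private lemma gauss_integrable_iff {v : ℝ≥0} (hv : v ≠ 0) (g : ℝ → ℝ) :
    Integrable g (gaussianReal 0 v) ↔
      Integrable (fun x => gaussianPDFReal 0 v x * g x) := by
  rw [gaussianReal_of_var_ne_zero 0 hv]
  have hd : gaussianPDF 0 v = fun x => ((Real.toNNReal (gaussianPDFReal 0 v x) : ℝ≥0) : ℝ≥0∞) :=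
    rfl
  rw [hd, integrable_withDensity_iff_integrable_smul
    ((measurable_gaussianPDFReal 0 v).real_toNNReal)]
  constructor <;> intro h <;> refine h.congr (Filter.Eventually.of_forall fun x => ?_) <;>
    simp only [NNReal.smul_def, smul_eq_mul,
      Real.coe_toNNReal _ (gaussianPDFReal_nonneg 0 v x)]

private lemma pdf_eq {σ : ℝ} (hσ : 0 < σ) (x : ℝ) :
    gaussianPDFReal 0 (Real.toNNReal (σ^2)) x
      = (Real.sqrt (2*π*σ^2))⁻¹ * Real.exp (-(2*σ^2)⁻¹ * x^2) := by
  unfold gaussianPDFReal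
  rw [Real.coe_toNNReal _ (sq_nonneg σ)]
  congr 1
  congr 1
  ring


private lemma toNNReal_sq_ne_zero {σ : ℝ} (hσ : 0 < σ) : Real.toNNReal (σ^2) ≠ 0 := by
  simp only [ne_eq, Real.toNNReal_eq_zero, not_le]
  positivity

private lemma gauss_integrable_sq {σ : ℝ} (hσ : 0 < σ) :
    Integrable (fun x : ℝ => x ^ 2) (gaussianReal 0 (Real.toNNReal (σ^2))) := by
  rw [gauss_integrable_iff (toNNReal_sq_ne_zero hσ)]
  have h : (fun x : ℝ => gaussianPDFReal 0 (Real.toNNReal (σ^2)) x * x ^ 2)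
      = fun x : ℝ => (Real.sqrt (2*π*σ^2))⁻¹ * (x ^ 2 * Real.exp (-(2*σ^2)⁻¹ * x^2)) := by
    funext x
    rw [pdf_eq hσ]
    ring
  rw [h]
  exact (integrable_sq_exp (by positivity)).const_mul _

private lemma gauss_integrable {σ : ℝ} (hσ : 0 < σ) {g : ℝ → ℝ}
    (hm : AEStronglyMeasurable g (gaussianReal 0 (Real.toNNReal (σ^2)))) {A B : ℝ}
    (hbd : ∀ x, |g x| ≤ A + B * x ^ 2) :
    Integrable g (gaussianReal 0 (Real.toNNReal (σ^2))) := by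
  have hdom : Integrable (fun x : ℝ => A + B * x ^ 2) (gaussianReal 0 (Real.toNNReal (σ^2))) :=
    (integrable_const A).add ((gauss_integrable_sq hσ).const_mul B)
  exact hdom.mono' hm (Filter.Eventually.of_forall fun x => by
    simpa [Real.norm_eq_abs] using hbd x)

private lemma arith_half {σ : ℝ} (hσ : 0 < σ) :
    (Real.sqrt (2*π*σ^2))⁻¹ * ((2*(2*σ^2)⁻¹)⁻¹ * (Real.sqrt (π / (2*σ^2)⁻¹) / 2))
      = σ^2 / 2 := by
  have h1 : (2*(2*σ^2)⁻¹)⁻¹ = σ^2 := by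
    rw [mul_inv, inv_inv]
    field_simp
  have h2 : π / (2*σ^2)⁻¹ = 2*π*σ^2 := by
    field_simp
  have h3 : (0:ℝ) < Real.sqrt (2*π*σ^2) := Real.sqrt_pos.mpr (by positivity)
  rw [h1, h2]
  field_simp

private lemma gauss_moment2 {σ : ℝ} (hσ : 0 < σ) :
    ∫ x, x ^ 2 ∂(gaussianReal 0 (Real.toNNReal (σ^2))) = σ ^ 2 := by
  rw [gauss_integral_eq (toNNReal_sq_ne_zero hσ)]
  have h : (fun x : ℝ => gaussianPDFReal 0 (Real.toNNReal (σ^2)) x * x ^ 2)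
      = fun x : ℝ => (fun u : ℝ => (Real.sqrt (2*π*σ^2))⁻¹ * (u ^ 2 * Real.exp (-(2*σ^2)⁻¹ * u^2))) |x| := by
    funext x
    rw [pdf_eq hσ]
    simp only [sq_abs]
    ring
  rw [h, integral_comp_abs
    (f := fun u : ℝ => (Real.sqrt (2*π*σ^2))⁻¹ * (u ^ 2 * Real.exp (-(2*σ^2)⁻¹ * u^2))),
    integral_const_mul,
    integral_Ioi_sq_exp (by positivity : (0:ℝ) < (2*σ^2)⁻¹)]
  have := arith_half hσ
  linarith


private lemma softThresh_fun_eq {s : ℝ} (hs : 0 ≤ s) :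
    softThresh s = fun y => y - max (-s) (min s y) :=
  funext fun y => softThresh_eq' hs y

private lemma gauss_map_neg {v : ℝ≥0} :
    (gaussianReal 0 v).map (fun x : ℝ => -x) = gaussianReal 0 v := by
  have h := gaussianReal_map_const_mul (μ := 0) (v := v) (-1)
  have h2 : (⟨(-1:ℝ)^2, sq_nonneg _⟩ : ℝ≥0) = 1 := by ext; norm_num
  rw [show (NNReal.mk ((-1:ℝ) ^ 2) (sq_nonneg (-1))) = 1 from h2, one_mul, mul_zero] at h
  simpa only [neg_one_mul] using h

private lemma part1 {σ t : ℝ} (hσ : 0 < σ) (ht : 0 ≤ t) (θ : ℝ) :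
    (∫ y, (softThresh (σ * t) y - θ) ^ 2 ∂(gaussianReal θ (Real.toNNReal (σ ^ 2)))) ≤
      σ ^ 2 * (1 + t ^ 2) := by
  set v := Real.toNNReal (σ ^ 2) with hv
  set s := σ * t with hsdef
  have hs0 : 0 ≤ s := by positivity
  have hsoft := softThresh_fun_eq hs0
  have hcont : Continuous (softThresh s) := by rw [hsoft]; fun_prop
  have hμ : gaussianReal θ v = (gaussianReal 0 v).map (· + θ) := by
    rw [gaussianReal_map_add_const]; norm_num
  rw [hμ, integral_map (by fun_prop : AEMeasurable (· + θ) (gaussianReal 0 v))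
    (f := fun y => (softThresh s y - θ) ^ 2) ((hcont.sub continuous_const).pow 2).aestronglyMeasurable]
  set G : ℝ → ℝ := fun z => max (-s) (min s (z + θ)) with hG
  have hGb : ∀ z, -s ≤ G z ∧ G z ≤ s := fun z =>
    ⟨le_max_left _ _, max_le (by linarith) (min_le_left _ _)⟩
  have hGmono : ∀ z w, z ≤ w → G z ≤ G w := fun z w h =>
    max_le_max le_rfl (min_le_min le_rfl (by linarith))
  have hrw : ∀ z : ℝ, softThresh s (z + θ) - θ = z - G z := by
    intro z
    rw [hsoft]
    simp only [hG]
    ring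
  simp only [hrw]
  have hGcont : Continuous G := by fun_prop
  have hbd : ∀ z : ℝ, |z * G z| ≤ s/2 + s/2 * z ^ 2 := by
    intro z
    have h1 : |G z| ≤ s := abs_le.mpr ⟨(hGb z).1, (hGb z).2⟩
    have h2 : |z * G z| ≤ |z| * s := by
      rw [abs_mul]
      exact mul_le_mul_of_nonneg_left h1 (abs_nonneg z)
    nlinarith [sq_nonneg (|z| - 1), abs_nonneg z, sq_abs z]
  have IzG : Integrable (fun z => z * G z) (gaussianReal 0 v) :=
    gauss_integrable hσ (by fun_prop : Continuous fun z => z * G z).aestronglyMeasurable hbd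
  have Ix2 : Integrable (fun z : ℝ => z ^ 2) (gaussianReal 0 v) := gauss_integrable_sq hσ
  have Ic : Integrable (fun _ : ℝ => s ^ 2) (gaussianReal 0 v) := integrable_const _
  have Isum : Integrable (fun z : ℝ => z ^ 2 + s ^ 2 - 2 * (z * G z)) (gaussianReal 0 v) :=
    (Ix2.add Ic).sub (IzG.const_mul 2)
  have step1 : (∫ z, (z - G z) ^ 2 ∂(gaussianReal 0 v)) ≤
      ∫ z, (z ^ 2 + s ^ 2 - 2 * (z * G z)) ∂(gaussianReal 0 v) := by
    refine integral_mono_of_nonneg (Filter.Eventually.of_forall fun z => sq_nonneg _) Isum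
      (Filter.Eventually.of_forall fun z => ?_)
    have h2 : (G z) ^ 2 ≤ s ^ 2 := sq_le_sq' (hGb z).1 (hGb z).2
    show (z - G z) ^ 2 ≤ z ^ 2 + s ^ 2 - 2 * (z * G z)
    nlinarith
  have step2 : (∫ z, (z ^ 2 + s ^ 2 - 2 * (z * G z)) ∂(gaussianReal 0 v))
      = σ ^ 2 + s ^ 2 - 2 * ∫ z, z * G z ∂(gaussianReal 0 v) := by
    have IA : Integrable (fun z : ℝ => z ^ 2 + s ^ 2) (gaussianReal 0 v) := Ix2.add Ic
    rw [integral_sub IA (IzG.const_mul 2), integral_add Ix2 Ic,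
      integral_const, integral_const_mul, gauss_moment2 hσ]
    simp
  have step3 : 0 ≤ ∫ z, z * G z ∂(gaussianReal 0 v) := by
    have hflipI : Integrable (fun z => (-z) * G (-z)) (gaussianReal 0 v) := by
      refine gauss_integrable hσ (by fun_prop : Continuous fun z => (-z) * G (-z)).aestronglyMeasurable
        (A := s/2) (B := s/2) fun z => ?_
      have := hbd (-z)
      simpa [neg_neg] using this
    have hflip : (∫ z, z * G z ∂(gaussianReal 0 v)) = ∫ z, (-z) * G (-z) ∂(gaussianReal 0 v) := by
      conv_lhs => rw [← gauss_map_neg (v := v)]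
      rw [integral_map measurable_neg.aemeasurable
        (by fun_prop : Continuous fun z => z * G z).aestronglyMeasurable]
    have h2 : 2 * (∫ z, z * G z ∂(gaussianReal 0 v))
        = ∫ z, (z * G z + (-z) * G (-z)) ∂(gaussianReal 0 v) := by
      rw [integral_add IzG hflipI, ← hflip]
      ring
    have h3 : 0 ≤ ∫ z, (z * G z + (-z) * G (-z)) ∂(gaussianReal 0 v) := by
      refine integral_nonneg fun z => ?_
      show (0:ℝ) ≤ z * G z + -z * G (-z)
      rcases le_or_gt 0 z with hz | hz
      · have h := hGmono (-z) z (by linarith)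
        nlinarith [mul_nonneg hz (sub_nonneg.mpr h)]
      · have h := hGmono z (-z) (by linarith)
        nlinarith [mul_nonneg (neg_nonneg.mpr hz.le) (sub_nonneg.mpr h)]
    linarith
  have hsq : s ^ 2 = σ ^ 2 * t ^ 2 := by rw [hsdef]; ring
  calc (∫ z, (z - G z) ^ 2 ∂(gaussianReal 0 v)) ≤ _ := step1
    _ = σ ^ 2 + s ^ 2 - 2 * ∫ z, z * G z ∂(gaussianReal 0 v) := step2
    _ ≤ σ ^ 2 + s ^ 2 := by linarith
    _ = σ ^ 2 * (1 + t ^ 2) := by rw [hsq]; ring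


private lemma sq_softThresh {s : ℝ} (hs : 0 ≤ s) (y : ℝ) :
    (softThresh s y) ^ 2 = (max (|y| - s) 0) ^ 2 := by
  unfold softThresh
  rw [mul_pow]
  rcases lt_trichotomy y 0 with hy | hy | hy
  · rw [Real.sign_of_neg hy]; norm_num
  · subst hy
    rw [abs_zero, Real.sign_zero, max_eq_right (by linarith : 0 - s ≤ (0:ℝ))]
    norm_num
  · rw [Real.sign_of_pos hy]; norm_num

private lemma part2 {σ t : ℝ} (hσ : 0 < σ) (ht : 0 ≤ t) :
    (∫ y, (softThresh (σ * t) y) ^ 2 ∂(gaussianReal 0 (Real.toNNReal (σ ^ 2)))) ≤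
      2 * σ ^ 2 * (1 + t ^ 2) * Real.exp (-t ^ 2 / 2) := by
  set s := σ * t with hsdef
  have hs0 : 0 ≤ s := by positivity
  set c : ℝ := (Real.sqrt (2*π*σ^2))⁻¹ with hc
  set b : ℝ := (2*σ^2)⁻¹ with hb
  have hbpos : 0 < b := by rw [hb]; positivity
  have hcpos : 0 < c := by rw [hc]; positivity
  set f : ℝ → ℝ := fun u => if 0 < u then c * (u^2 * Real.exp (-b*u^2)) else 0 with hf
  have hfnn : ∀ u, 0 ≤ f u := by
    intro u
    rw [hf]
    dsimp only
    split_ifs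
    · positivity
    · exact le_rfl
  have hfind : f = (Ioi (0:ℝ)).indicator (fun u => c * (u^2 * Real.exp (-b*u^2))) := by
    funext u
    rw [Set.indicator_apply]
    simp [hf, Set.mem_Ioi]
  have hfint : Integrable f := by
    rw [hfind]
    exact ((integrable_sq_exp hbpos).const_mul c).indicator measurableSet_Ioi
  have hfI : (∫ u, f u) = σ^2/2 := by
    rw [hfind, integral_indicator measurableSet_Ioi, integral_const_mul,
      integral_Ioi_sq_exp hbpos]
    exact arith_half hσ
  have hbs : b * s^2 = t^2/2 := by
    rw [hb, hsdef]
    field_simp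
  have hpt : ∀ y, gaussianPDFReal 0 (Real.toNNReal (σ^2)) y * (softThresh s y)^2 ≤
      Real.exp (-t^2/2) * (f (y - s) + f (-y - s)) := by
    intro y
    rw [pdf_eq hσ, sq_softThresh hs0, ← hc, ← hb]
    rcases le_or_gt (|y|) s with hy | hy
    · rw [max_eq_right (by linarith : |y| - s ≤ 0)]
      have h1 := hfnn (y - s)
      have h2 := hfnn (-y - s)
      have h3 := Real.exp_nonneg (-t^2/2)
      nlinarith
    · rcases le_or_gt 0 y with h0 | h0
      · have hys : s < y := by rwa [abs_of_nonneg h0] at hy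
        have h1 : f (y - s) = c * ((y-s)^2 * Real.exp (-b*(y-s)^2)) := if_pos (by linarith)
        have h2 : f (-y - s) = 0 := if_neg (by push_neg; nlinarith)
        have hq : max (|y| - s) 0 = y - s := by
          rw [abs_of_nonneg h0]
          exact max_eq_left (by linarith)
        rw [h1, h2, hq, add_zero]
        have hexp : Real.exp (-b*y^2) ≤ Real.exp (-t^2/2) * Real.exp (-b*(y-s)^2) := by
          rw [← Real.exp_add, Real.exp_le_exp]
          nlinarith [mul_nonneg (mul_nonneg hbpos.le hs0) (by linarith : (0:ℝ) ≤ y - s)]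
        calc c * Real.exp (-b*y^2) * (y-s)^2
            ≤ c * (Real.exp (-t^2/2) * Real.exp (-b*(y-s)^2)) * (y-s)^2 := by
              exact mul_le_mul_of_nonneg_right
                (mul_le_mul_of_nonneg_left hexp hcpos.le) (sq_nonneg _)
          _ = Real.exp (-t^2/2) * (c * ((y-s)^2 * Real.exp (-b*(y-s)^2))) := by ring
      · have hys : s < -y := by rwa [abs_of_neg h0] at hy
        have h1 : f (y - s) = 0 := if_neg (by push_neg; nlinarith)
        have h2 : f (-y - s) = c * ((-y-s)^2 * Real.exp (-b*(-y-s)^2)) := if_pos (by linarith)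
        have hq : max (|y| - s) 0 = -y - s := by
          rw [abs_of_neg h0]
          exact max_eq_left (by linarith)
        rw [h1, h2, hq, zero_add]
        have hexp : Real.exp (-b*y^2) ≤ Real.exp (-t^2/2) * Real.exp (-b*(-y-s)^2) := by
          rw [← Real.exp_add, Real.exp_le_exp]
          nlinarith [mul_nonneg (mul_nonneg hbpos.le hs0) (by linarith : (0:ℝ) ≤ -y - s)]
        calc c * Real.exp (-b*y^2) * (-y-s)^2
            ≤ c * (Real.exp (-t^2/2) * Real.exp (-b*(-y-s)^2)) * (-y-s)^2 := by
              exact mul_le_mul_of_nonneg_right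
                (mul_le_mul_of_nonneg_left hexp hcpos.le) (sq_nonneg _)
          _ = Real.exp (-t^2/2) * (c * ((-y-s)^2 * Real.exp (-b*(-y-s)^2))) := by ring
  have hIs : Integrable (fun y : ℝ => f (y - s)) := hfint.comp_sub_right s
  have hIns : Integrable (fun y : ℝ => f (-y - s)) := by
    have h : (fun y : ℝ => f (-y - s)) = fun y : ℝ => (fun z : ℝ => f (z - s)) (-y) := by
      funext y; rfl
    rw [h]
    exact hIs.comp_neg
  have hIrhs : Integrable (fun y : ℝ => Real.exp (-t^2/2) * (f (y - s) + f (-y - s))) :=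
    (hIs.add hIns).const_mul _
  rw [gauss_integral_eq (toNNReal_sq_ne_zero hσ)]
  have step : (∫ y, gaussianPDFReal 0 (Real.toNNReal (σ^2)) y * (softThresh s y)^2) ≤
      ∫ y, Real.exp (-t^2/2) * (f (y - s) + f (-y - s)) := by
    refine integral_mono_of_nonneg (Filter.Eventually.of_forall fun y =>
      mul_nonneg (gaussianPDFReal_nonneg _ _ _) (sq_nonneg _)) hIrhs
      (Filter.Eventually.of_forall hpt)
  have e2 : (∫ y : ℝ, f (-y - s)) = ∫ y : ℝ, f (y - s) := by
    simpa using integral_neg_eq_self (fun y : ℝ => f (y - s)) (volume : Measure ℝ)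
  have e3 : (∫ y : ℝ, f (y - s)) = ∫ y, f y := by
    simpa using integral_sub_right_eq_self f s
  have rhsval : (∫ y : ℝ, Real.exp (-t^2/2) * (f (y - s) + f (-y - s)))
      = Real.exp (-t^2/2) * σ^2 := by
    rw [integral_const_mul, integral_add hIs hIns, e2, e3, hfI]
    ring
  have final : Real.exp (-t^2/2) * σ^2 ≤ 2 * σ^2 * (1 + t^2) * Real.exp (-t^2/2) := by
    have key : 0 ≤ σ^2 * Real.exp (-t^2/2) * (1 + 2*t^2) := by positivity
    nlinarith [key]
  calc (∫ y, gaussianPDFReal 0 (Real.toNNReal (σ^2)) y * (softThresh s y)^2) ≤ _ := step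
    _ = Real.exp (-t^2/2) * σ^2 := rhsval
    _ ≤ 2 * σ^2 * (1 + t^2) * Real.exp (-t^2/2) := final

end SoftThreshAux

theorem soft_threshold_gaussian_risk (σ t : ℝ) (hσ : 0 < σ) (ht : 0 ≤ t) :
    (∀ θ : ℝ,
      (∫ y, (softThresh (σ * t) y - θ) ^ 2 ∂(gaussianReal θ (Real.toNNReal (σ ^ 2)))) ≤
        σ ^ 2 * (1 + t ^ 2)) ∧
    (∫ y, (softThresh (σ * t) y) ^ 2 ∂(gaussianReal 0 (Real.toNNReal (σ ^ 2)))) ≤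
      2 * σ ^ 2 * (1 + t ^ 2) * Real.exp (-t ^ 2 / 2) := by
  exact ⟨fun θ => part1 hσ ht θ, part2 hσ ht⟩
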